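/- arXiv:1802.03448 — 4 statements merged into one kernel-verified Lean document; each statement's English description precedes it below -/
import Mathlib

section
/- Let p be an odd prime and A the 3-dimensional F_p-algebra with basis x, y, z where xy = z, yx = −z, and all other products of basis elements are zero. Then A has exactly p + 4 left ideals (including the zero ideal and A itself). -/
/-- Multiplication on the algebra `A_{3,5}`: for elements `a·x + b·y + c·z` recorded
as triples, `(a,b,c)·(a',b',c') = (0, 0, a·b' − b·a')` (from `xy = z`, `yx = −z`,
all other products of basis elements zero). -/
def A35mul {p : ℕ} (u v : ZMod p × ZMod p × ZMod p) : ZMod p × ZMod p × ZMod p :=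
  (0, 0, u.1 * v.2.1 - u.2.1 * v.1)

section Aux

variable (p : ℕ)

/-- The line ideal `{(a, t·a, c)}`. -/
def A35Lt (t : ZMod p) : AddSubgroup (ZMod p × ZMod p × ZMod p) where
  carrier := {v | v.2.1 = t * v.1}
  zero_mem' := by simp
  add_mem' := by
    rintro a b (ha : _ = _) (hb : _ = _)
    show (a + b).2.1 = t * (a + b).1
    simp only [Prod.fst_add, Prod.snd_add, ha, hb]
    ring
  neg_mem' := by
    rintro a (ha : _ = _)
    show (-a).2.1 = t * (-a).1
    simp [ha]

@[simp] lemma mem_A35Lt {t : ZMod p} {v : ZMod p × ZMod p × ZMod p} :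
    v ∈ A35Lt p t ↔ v.2.1 = t * v.1 := Iff.rfl

/-- The ideal `{(0, b, c)}`. -/
def A35Linf : AddSubgroup (ZMod p × ZMod p × ZMod p) where
  carrier := {v | v.1 = 0}
  zero_mem' := by simp
  add_mem' := by
    rintro a b (ha : _ = _) (hb : _ = _)
    show (a + b).1 = 0
    simp [ha, hb]
  neg_mem' := by
    rintro a (ha : _ = _)
    show (-a).1 = 0
    simp [ha]

@[simp] lemma mem_A35Linf {v : ZMod p × ZMod p × ZMod p} :
    v ∈ A35Linf p ↔ v.1 = 0 := Iff.rfl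

/-- The center-line ideal `{(0, 0, c)}`. -/
def A35Z : AddSubgroup (ZMod p × ZMod p × ZMod p) where
  carrier := {v | v.1 = 0 ∧ v.2.1 = 0}
  zero_mem' := by simp
  add_mem' := by
    rintro a b ⟨ha1, ha2⟩ ⟨hb1, hb2⟩
    refine ⟨?_, ?_⟩ <;> show _ = (0 : ZMod p) <;> simp_all
  neg_mem' := by
    rintro a ⟨ha1, ha2⟩
    refine ⟨?_, ?_⟩ <;> show _ = (0 : ZMod p) <;> simp_all

@[simp] lemma mem_A35Z {v : ZMod p × ZMod p × ZMod p} :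
    v ∈ A35Z p ↔ v.1 = 0 ∧ v.2.1 = 0 := Iff.rfl

lemma idl_A35Lt (t : ZMod p) :
    ∀ a x : ZMod p × ZMod p × ZMod p, x ∈ A35Lt p t → A35mul a x ∈ A35Lt p t := by
  intro a x _; simp [A35mul]

lemma idl_A35Linf :
    ∀ a x : ZMod p × ZMod p × ZMod p, x ∈ A35Linf p → A35mul a x ∈ A35Linf p := by
  intro a x _; simp [A35mul]

lemma idl_A35Z :
    ∀ a x : ZMod p × ZMod p × ZMod p, x ∈ A35Z p → A35mul a x ∈ A35Z p := by
  intro a x _; simp [A35mul]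

lemma idl_bot :
    ∀ a x : ZMod p × ZMod p × ZMod p, x ∈ (⊥ : AddSubgroup (ZMod p × ZMod p × ZMod p)) →
      A35mul a x ∈ (⊥ : AddSubgroup (ZMod p × ZMod p × ZMod p)) := by
  intro a x hx
  rw [AddSubgroup.mem_bot] at hx ⊢
  simp [A35mul, hx, Prod.ext_iff]

lemma idl_top :
    ∀ a x : ZMod p × ZMod p × ZMod p, x ∈ (⊤ : AddSubgroup (ZMod p × ZMod p × ZMod p)) →
      A35mul a x ∈ (⊤ : AddSubgroup (ZMod p × ZMod p × ZMod p)) := by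
  intro a x _; trivial

/-- smul closure of additive subgroups under `ZMod p` scalars. -/
lemma A35smul_mem (I : AddSubgroup (ZMod p × ZMod p × ZMod p))
    {v : ZMod p × ZMod p × ZMod p} (c : ZMod p) (hv : v ∈ I) : c • v ∈ I := by
  have := (AddSubgroup.toZModSubmodule p I).smul_mem c
    (by simpa using hv)
  simpa using this

variable [Fact p.Prime]

/-- The classification map for left ideals. -/
def A35f : Option (ZMod p) ⊕ Option Bool →
    {I : AddSubgroup (ZMod p × ZMod p × ZMod p) //
      ∀ a x : ZMod p × ZMod p × ZMod p, x ∈ I → A35mul a x ∈ I}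
  | .inl (some t) => ⟨A35Lt p t, idl_A35Lt p t⟩
  | .inl none => ⟨A35Linf p, idl_A35Linf p⟩
  | .inr (some true) => ⟨⊤, idl_top p⟩
  | .inr (some false) => ⟨A35Z p, idl_A35Z p⟩
  | .inr none => ⟨⊥, idl_bot p⟩

-- distinctness lemmas
lemma A35Lt_inj {t s : ZMod p} (h : A35Lt p t = A35Lt p s) : t = s := by
  have := (SetLike.ext_iff.mp h ((1 : ZMod p), t, 0)).mp (by simp)
  simpa using this

lemma A35Lt_ne_Linf (t : ZMod p) : A35Lt p t ≠ A35Linf p := by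
  intro h
  have := (SetLike.ext_iff.mp h ((1 : ZMod p), t, 0)).mp (by simp)
  simp at this

lemma A35Lt_ne_Z (t : ZMod p) : A35Lt p t ≠ A35Z p := by
  intro h
  have := (SetLike.ext_iff.mp h ((1 : ZMod p), t, 0)).mp (by simp)
  simp at this

lemma A35Lt_ne_bot (t : ZMod p) : A35Lt p t ≠ ⊥ := by
  intro h
  have := (SetLike.ext_iff.mp h ((0 : ZMod p), 0, 1)).mp (by simp)
  rw [AddSubgroup.mem_bot] at this
  simpa [Prod.ext_iff] using this

lemma A35Lt_ne_top (t : ZMod p) : A35Lt p t ≠ ⊤ := by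
  intro h
  have := (SetLike.ext_iff.mp h ((0 : ZMod p), 1, 0)).mpr trivial
  simp at this

lemma A35Linf_ne_Z : A35Linf p ≠ A35Z p := by
  intro h
  have := (SetLike.ext_iff.mp h ((0 : ZMod p), 1, 0)).mp (by simp)
  simp at this

lemma A35Linf_ne_bot : A35Linf p ≠ ⊥ := by
  intro h
  have := (SetLike.ext_iff.mp h ((0 : ZMod p), 0, 1)).mp (by simp)
  rw [AddSubgroup.mem_bot] at this
  simpa [Prod.ext_iff] using this

lemma A35Linf_ne_top : A35Linf p ≠ ⊤ := by
  intro h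
  have := (SetLike.ext_iff.mp h ((1 : ZMod p), 0, 0)).mpr trivial
  simp at this

lemma A35Z_ne_bot : A35Z p ≠ ⊥ := by
  intro h
  have := (SetLike.ext_iff.mp h ((0 : ZMod p), 0, 1)).mp (by simp)
  rw [AddSubgroup.mem_bot] at this
  simpa [Prod.ext_iff] using this

lemma A35Z_ne_top : A35Z p ≠ ⊤ := by
  intro h
  have := (SetLike.ext_iff.mp h ((1 : ZMod p), 0, 0)).mpr trivial
  simp at this

lemma A35bot_ne_top : (⊥ : AddSubgroup (ZMod p × ZMod p × ZMod p)) ≠ ⊤ := by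
  intro h
  have := (SetLike.ext_iff.mp h ((0 : ZMod p), 0, 1)).mpr trivial
  rw [AddSubgroup.mem_bot] at this
  simpa [Prod.ext_iff] using this

lemma A35f_injective : Function.Injective (A35f p) := by
  intro a b h
  have h' := congrArg Subtype.val h
  rcases a with (_ | t) | (_ | (_ | _)) <;> rcases b with (_ | s) | (_ | (_ | _)) <;>
    simp only [A35f] at h' <;>
    first
      | rfl
      | (rw [A35Lt_inj p h'])
      | exact absurd h' (A35Lt_ne_Linf p _)
      | exact absurd h'.symm (A35Lt_ne_Linf p _)
      | exact absurd h' (A35Lt_ne_Z p _)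
      | exact absurd h'.symm (A35Lt_ne_Z p _)
      | exact absurd h' (A35Lt_ne_bot p _)
      | exact absurd h'.symm (A35Lt_ne_bot p _)
      | exact absurd h' (A35Lt_ne_top p _)
      | exact absurd h'.symm (A35Lt_ne_top p _)
      | exact absurd h' (A35Linf_ne_Z p)
      | exact absurd h'.symm (A35Linf_ne_Z p)
      | exact absurd h' (A35Linf_ne_bot p)
      | exact absurd h'.symm (A35Linf_ne_bot p)
      | exact absurd h' (A35Linf_ne_top p)
      | exact absurd h'.symm (A35Linf_ne_top p)
      | exact absurd h' (A35Z_ne_bot p)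
      | exact absurd h'.symm (A35Z_ne_bot p)
      | exact absurd h' (A35Z_ne_top p)
      | exact absurd h'.symm (A35Z_ne_top p)
      | exact absurd h' (A35bot_ne_top p)
      | exact absurd h'.symm (A35bot_ne_top p)

lemma A35f_surjective : Function.Surjective (A35f p) := by
  rintro ⟨I, hI⟩
  by_cases hsub : ∀ v ∈ I, v.1 = 0 ∧ v.2.1 = 0
  · by_cases h0 : ∀ v ∈ I, v = 0
    · refine ⟨.inr none, Subtype.ext ?_⟩
      simp only [A35f]
      ext v
      rw [AddSubgroup.mem_bot]
      exact ⟨fun hv => hv ▸ I.zero_mem, fun hv => h0 v hv⟩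
    · push_neg at h0
      obtain ⟨u, hu, hune⟩ := h0
      refine ⟨.inr (some false), Subtype.ext ?_⟩
      simp only [A35f]
      have hu1 : u.1 = 0 := (hsub u hu).1
      have hu2 : u.2.1 = 0 := (hsub u hu).2
      have hu3 : u.2.2 ≠ 0 := by
        intro h
        exact hune (by rw [Prod.ext_iff, Prod.ext_iff]; exact ⟨hu1, hu2, h⟩)
      ext v
      constructor
      · rintro ⟨hv1, hv2⟩
        have : v = (v.2.2 * u.2.2⁻¹) • u := by
          rw [Prod.ext_iff, Prod.ext_iff]
          refine ⟨?_, ?_, ?_⟩ <;>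
            simp only [Prod.smul_fst, Prod.smul_snd, smul_eq_mul, hu1, hu2, hv1, hv2, mul_zero]
          field_simp
        rw [this]
        exact A35smul_mem p I _ hu
      · intro hv
        exact hsub v hv
  · push_neg at hsub
    obtain ⟨u, hu, hune⟩ := hsub
    -- Z ⊆ I
    have hZ : ∀ c : ZMod p, ((0 : ZMod p), (0 : ZMod p), c) ∈ I := by
      intro c
      by_cases h1 : u.1 = 0
      · have h2 : u.2.1 ≠ 0 := fun h => hune h1 h
        have := hI (c * u.2.1⁻¹, 0, 0) u hu
        have he : A35mul ((c * u.2.1⁻¹ : ZMod p), (0:ZMod p), (0:ZMod p)) u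
            = ((0:ZMod p), (0:ZMod p), c) := by
          simp only [A35mul]
          rw [Prod.ext_iff, Prod.ext_iff]
          refine ⟨rfl, rfl, ?_⟩
          field_simp; ring
        rwa [he] at this
      · have := hI (0, -c * u.1⁻¹, 0) u hu
        have he : A35mul ((0:ZMod p), (-c * u.1⁻¹ : ZMod p), (0:ZMod p)) u
            = ((0:ZMod p), (0:ZMod p), c) := by
          simp only [A35mul]
          rw [Prod.ext_iff, Prod.ext_iff]
          refine ⟨rfl, rfl, ?_⟩
          field_simp; ring
        rwa [he] at this
    by_cases htop : ∃ v ∈ I, u.1 * v.2.1 - u.2.1 * v.1 ≠ 0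
    · obtain ⟨v, hv, hd⟩ := htop
      refine ⟨.inr (some true), Subtype.ext ?_⟩
      simp only [A35f]
      ext w
      simp only [AddSubgroup.mem_top, true_iff]
      set d : ZMod p := u.1 * v.2.1 - u.2.1 * v.1 with hdd
      set α : ZMod p := (w.1 * v.2.1 - w.2.1 * v.1) * d⁻¹ with hα
      set β : ZMod p := (u.1 * w.2.1 - u.2.1 * w.1) * d⁻¹ with hβ
      have hw : w = α • u + β • v + ((0:ZMod p), (0:ZMod p), w.2.2 - α * u.2.2 - β * v.2.2) := by
        rw [Prod.ext_iff, Prod.ext_iff]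
        refine ⟨?_, ?_, ?_⟩ <;>
          simp only [Prod.fst_add, Prod.snd_add, Prod.smul_fst, Prod.smul_snd, smul_eq_mul,
            hα, hβ]
        · field_simp
          ring
        · field_simp
          ring
        · ring
      rw [hw]
      exact I.add_mem (I.add_mem (A35smul_mem p I _ hu) (A35smul_mem p I _ hv)) (hZ _)
    · push_neg at htop
      by_cases h1 : u.1 = 0
      · have h2 : u.2.1 ≠ 0 := fun h => hune h1 h
        refine ⟨.inl none, Subtype.ext ?_⟩
        simp only [A35f]
        ext v
        rw [mem_A35Linf]
        constructor
        · intro hv1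
          have hveq : v = (v.2.1 * u.2.1⁻¹) • u
              + ((0:ZMod p), (0:ZMod p), v.2.2 - v.2.1 * u.2.1⁻¹ * u.2.2) := by
            rw [Prod.ext_iff, Prod.ext_iff]
            refine ⟨?_, ?_, ?_⟩ <;>
              simp only [Prod.fst_add, Prod.snd_add, Prod.smul_fst, Prod.smul_snd, smul_eq_mul,
                h1, hv1, mul_zero, add_zero, zero_add]
            · field_simp
            · ring
          rw [hveq]
          exact I.add_mem (A35smul_mem p I _ hu) (hZ _)
        · intro hv
          have := htop v hv
          rw [h1] at this
          simp only [zero_mul, zero_sub, neg_eq_zero] at this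
          exact (mul_eq_zero.mp this).resolve_left h2
      · refine ⟨.inl (some (u.2.1 * u.1⁻¹)), Subtype.ext ?_⟩
        simp only [A35f]
        ext v
        rw [mem_A35Lt]
        constructor
        · intro hv2
          have hveq : v = (v.1 * u.1⁻¹) • u
              + ((0:ZMod p), (0:ZMod p), v.2.2 - v.1 * u.1⁻¹ * u.2.2) := by
            rw [Prod.ext_iff, Prod.ext_iff]
            refine ⟨?_, ?_, ?_⟩ <;>
              simp only [Prod.fst_add, Prod.snd_add, Prod.smul_fst, Prod.smul_snd, smul_eq_mul]
            · field_simp; ring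
            · rw [hv2]; field_simp; ring
            · ring
          rw [hveq]
          exact I.add_mem (A35smul_mem p I _ hu) (hZ _)
        · intro hv
          have := htop v hv
          have : u.1 * v.2.1 = u.2.1 * v.1 := by linear_combination this
          field_simp
          linear_combination this

end Aux

/-- For `p` an odd prime, the algebra `A_{3,5}` has exactly `p + 4`
left ideals (additive subgroups closed under left multiplication), including the
zero ideal and `A` itself. -/
theorem A35_left_ideal_count (p : ℕ) [Fact p.Prime] (hp : Odd p) :
    Nat.card {I : AddSubgroup (ZMod p × ZMod p × ZMod p) //
      ∀ a x : ZMod p × ZMod p × ZMod p, x ∈ I → A35mul a x ∈ I} = p + 4 := by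
  haveI : NeZero p := ⟨(Fact.out : p.Prime).ne_zero⟩
  rw [Nat.card_congr (Equiv.ofBijective (A35f p) ⟨A35f_injective p, A35f_surjective p⟩).symm]
  rw [Nat.card_eq_fintype_card]
  simp [ZMod.card]
end

section
/- Let p be an odd prime, δ ∈ F_p, and A the 3-dimensional F_p-algebra with basis x, y, z where x² = z, y² = δz, xy = z, yx = 0, and zw = wz = 0 for all w ∈ A. Then for the circle operation u ∘ v = u + v + uv, one has (a x + b y + c z)^{∘ r} = r a x + r b y + (r c + C(r,2)(a² + ab + δ b²)) z for all r ≥ 1; in particular every element has order dividing p and (A, ∘) is isomorphic to the Heisenberg group Heis_3(F_p). -/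
/-- Multiplication on the algebra `A^δ_{3,4}`: for elements `a·x + b·y + c·z`
recorded as triples, using `x² = z`, `y² = δz`, `xy = z`, `yx = 0`, and all products
with `z` zero, one gets `(a,b,c)·(a',b',c') = (0, 0, a·a' + a·b' + δ·b·b')`. -/
def A34mul {p : ℕ} (δ : ZMod p) (u v : ZMod p × ZMod p × ZMod p) :
    ZMod p × ZMod p × ZMod p :=
  (0, 0, u.1 * v.1 + u.1 * v.2.1 + δ * u.2.1 * v.2.1)

/-- The circle operation `u ∘ v = u + v + u·v` on `A^δ_{3,4}`. -/
def A34circ {p : ℕ} (δ : ZMod p) (u v : ZMod p × ZMod p × ZMod p) :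
    ZMod p × ZMod p × ZMod p :=
  u + v + A34mul δ u v

/-- The `r`-fold circle power `u^{∘ r}` in `A^δ_{3,4}`. -/
def A34circPow {p : ℕ} (δ : ZMod p) (u : ZMod p × ZMod p × ZMod p) :
    ℕ → ZMod p × ZMod p × ZMod p
  | 0 => 0
  | n + 1 => A34circ δ u (A34circPow δ u n)

/-- `M` is upper unitriangular: `1`s on the diagonal, `0`s below. -/
def IsUnitriangular {p : ℕ} (M : Matrix (Fin 3) (Fin 3) (ZMod p)) : Prop :=
  M 0 0 = 1 ∧ M 1 1 = 1 ∧ M 2 2 = 1 ∧ M 1 0 = 0 ∧ M 2 0 = 0 ∧ M 2 1 = 0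

lemma A34_pow_formula {p : ℕ} (δ : ZMod p) (u : ZMod p × ZMod p × ZMod p)
    (r : ℕ) (hr : 1 ≤ r) :
    A34circPow δ u r =
      ((r : ZMod p) * u.1, (r : ZMod p) * u.2.1,
        (r : ZMod p) * u.2.2 +
          ((r.choose 2 : ℕ) : ZMod p) *
            (u.1 ^ 2 + u.1 * u.2.1 + δ * u.2.1 ^ 2)) := by
  induction r with
  | zero => omega
  | succ n ih =>
    rcases Nat.eq_or_lt_of_le hr with h | h
    · have hn0 : n = 0 := by omega
      subst hn0
      simp [A34circPow, A34circ, A34mul, Prod.ext_iff]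
    · have hn : 1 ≤ n := by omega
      rw [A34circPow, ih hn]
      have hc : (n + 1).choose 2 = n.choose 2 + n := by
        rw [Nat.choose_succ_succ, Nat.choose_one_right, Nat.add_comm]
      simp only [A34circ, A34mul, hc, Prod.ext_iff, Prod.mk_add_mk, Prod.fst_add,
        Prod.snd_add, Nat.cast_add, Nat.cast_one]
      refine ⟨by ring, by ring, ?_⟩
      ring

/-- For `p` an odd prime and `δ ∈ F_p`, in `A = A^δ_{3,4}` one has
`(ax + by + cz)^{∘ r} = (ra, rb, rc + C(r,2)(a² + ab + δb²))` for all `r ≥ 1`;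
in particular every element has order dividing `p`, and the circle group `(A, ∘)`
is isomorphic to the Heisenberg group `Heis₃(F_p)` of upper unitriangular matrices. -/
theorem A34_circ_heisenberg (p : ℕ) [Fact p.Prime] (hp : Odd p) (δ : ZMod p) :
    (∀ u : ZMod p × ZMod p × ZMod p, ∀ r : ℕ, 1 ≤ r →
      A34circPow δ u r =
        ((r : ZMod p) * u.1, (r : ZMod p) * u.2.1,
          (r : ZMod p) * u.2.2 +
            ((r.choose 2 : ℕ) : ZMod p) *
              (u.1 ^ 2 + u.1 * u.2.1 + δ * u.2.1 ^ 2))) ∧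
    (∀ u : ZMod p × ZMod p × ZMod p, A34circPow δ u p = 0) ∧
    (∃ e : (ZMod p × ZMod p × ZMod p) ≃
        {M : Matrix (Fin 3) (Fin 3) (ZMod p) // IsUnitriangular M},
      ∀ u v : ZMod p × ZMod p × ZMod p,
        (e (A34circ δ u v) : Matrix (Fin 3) (Fin 3) (ZMod p)) =
          (e u : Matrix (Fin 3) (Fin 3) (ZMod p)) *
          (e v : Matrix (Fin 3) (Fin 3) (ZMod p))) := by
  have hprime := (Fact.out : p.Prime)
  have hp2 : 2 < p := by
    have := hprime.two_le
    rcases hp with ⟨k, hk⟩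
    omega
  have h2ne : (2 : ZMod p) ≠ 0 := by
    have : ((2 : ℕ) : ZMod p) ≠ 0 := by
      rw [Ne, ZMod.natCast_eq_zero_iff]
      exact fun h => absurd (Nat.le_of_dvd (by norm_num) h) (by omega)
    simpa using this
  refine ⟨fun u r hr => A34_pow_formula δ u r hr, ?_, ?_⟩
  · intro u
    rw [A34_pow_formula δ u p hprime.one_lt.le]
    have h1 : ((p : ℕ) : ZMod p) = 0 := ZMod.natCast_self p
    have h2 : ((p.choose 2 : ℕ) : ZMod p) = 0 := by
      rw [ZMod.natCast_eq_zero_iff]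
      exact hprime.dvd_choose_self (by norm_num) hp2
    simp [h1, h2, Prod.ext_iff]
  · refine ⟨{
      toFun := fun u => ⟨!![1, u.1, u.2.2 - (u.1 ^ 2 + δ * u.2.1 ^ 2) * (2 : ZMod p)⁻¹;
                           0, 1, u.2.1; 0, 0, 1],
        by simp [IsUnitriangular, Matrix.vecHead, Matrix.vecTail]⟩
      invFun := fun M =>
        (M.1 0 1, M.1 1 2, M.1 0 2 + ((M.1 0 1) ^ 2 + δ * (M.1 1 2) ^ 2) * (2 : ZMod p)⁻¹)
      left_inv := fun u => by simp
      right_inv := fun M => by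
        obtain ⟨M, h00, h11, h22, h10, h20, h21⟩ := M
        ext i j
        fin_cases i <;> fin_cases j <;>
          simp [h00, h11, h22, h10, h20, h21, Matrix.vecHead, Matrix.vecTail] <;> ring }, ?_⟩
    intro u v
    obtain ⟨a, b, c⟩ := u
    obtain ⟨a', b', c'⟩ := v
    have h2inv : (2 : ZMod p) * (2 : ZMod p)⁻¹ = 1 := mul_inv_cancel₀ h2ne
    ext i j
    fin_cases i <;> fin_cases j <;>
        simp [A34circ, A34mul, Matrix.mul_apply, Fin.sum_univ_three,
          Matrix.vecHead, Matrix.vecTail] <;>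
      first
        | ring1
        | linear_combination (-(a * a') - δ * b * b') * h2inv
end

section
/- Let G be a finite group with an exact factorization G = HJ (H, J subgroups with |H||J| = |G| and H ∩ J = {e}), and let (G, ·, ∘) be the associated skew left brace with g ∘ x = g_l · x · g_r for g = g_l g_r, g_l ∈ H, g_r ∈ J. Then a subgroup G' of (G, ·) is ∘-stable if and only if G' is closed under conjugation by all elements of H. -/
/-- Let `G` be a finite group with an exact factorization `G = HJ`
(`|H|·|J| = |G|`, `H ∩ J = {e}`, each `g` factoring uniquely as `g = l g * r g`
with `l g ∈ H`, `r g ∈ J`), and consider the associated skew left brace on `G` with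
`g ∘ x = l g * x * r g`. Then a subgroup `G'` of `(G, ·)` is `∘`-stable
(`(g ∘ x) · g⁻¹ ∈ G'` for all `g ∈ G`, `x ∈ G'`) if and only if `G'` is closed
under conjugation by all elements of `H`. -/
theorem exact_factorization_circ_stable_iff {G : Type*} [Group G] [Finite G]
    (H J : Subgroup G)
    (hcard : Nat.card H * Nat.card J = Nat.card G)
    (hint : H ⊓ J = ⊥)
    (l r : G → G) (hl : ∀ g, l g ∈ H) (hr : ∀ g, r g ∈ J)
    (hfac : ∀ g, g = l g * r g)
    (G' : Subgroup G) :
    (∀ g : G, ∀ x ∈ G', (l g * x * r g) * g⁻¹ ∈ G') ↔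
      (∀ h ∈ H, ∀ x ∈ G', h * x * h⁻¹ ∈ G') := by
  constructor
  · intro hst h hh x hx
    have hrh : r h ∈ H := by
      have : r h = (l h)⁻¹ * h := eq_inv_mul_of_mul_eq (hfac h).symm
      rw [this]; exact H.mul_mem (H.inv_mem (hl h)) hh
    have hr1 : r h = 1 := by
      have : r h ∈ H ⊓ J := ⟨hrh, hr h⟩
      rw [hint] at this; simpa using this
    have hlh : l h = h := by
      have := hfac h; rw [hr1, mul_one] at this; exact this.symm
    have := hst h x hx
    rwa [hlh, hr1, mul_one] at this
  · intro hc g x hx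
    have hg : g⁻¹ = (r g)⁻¹ * (l g)⁻¹ := by
      conv_lhs => rw [hfac g]
      rw [mul_inv_rev]
    have : (l g * x * r g) * g⁻¹ = l g * x * (l g)⁻¹ := by
      rw [hg]; group
    rw [this]
    exact hc (l g) (hl g) x hx
end

section
/- Let n ≥ 5 and consider the skew left brace structure on G = S_n arising from the exact factorization S_n = A_n · C, where C is the order-2 subgroup generated by a fixed transposition, with operation g ∘ x = g_l x g_r for g = g_l g_r, g_l ∈ A_n, g_r ∈ C. Then the only ∘-stable subgroups of S_n are the trivial subgroup, A_n, and S_n itself; equivalently, the only subgroups of S_n closed under conjugation by all elements of A_n are {e}, A_n, and S_n. -/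
open Equiv Equiv.Perm

namespace CircStable18

variable {n : ℕ}

lemma extendDomain_swap' {α β : Type*} [DecidableEq α] [DecidableEq β] {p : β → Prop}
    [DecidablePred p] (f : α ≃ Subtype p) (i j : α) :
    (Equiv.swap i j).extendDomain f = Equiv.swap (f i : β) (f j : β) := by
  ext x
  by_cases hx : p x
  · obtain ⟨y, rfl⟩ : ∃ y, (f y : β) = x := ⟨f.symm ⟨x, hx⟩, by simp⟩
    rw [Perm.extendDomain_apply_image]
    have hinj : Function.Injective fun a : α => (f a : β) :=
      fun a b h => f.injective (Subtype.coe_injective h)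
    rcases eq_or_ne y i with rfl | hyi
    · rw [Equiv.swap_apply_left, Equiv.swap_apply_left]
    rcases eq_or_ne y j with rfl | hyj
    · rw [Equiv.swap_apply_right, Equiv.swap_apply_right]
    · rw [Equiv.swap_apply_of_ne_of_ne hyi hyj,
        Equiv.swap_apply_of_ne_of_ne (fun h => hyi (hinj h)) (fun h => hyj (hinj h))]
  · rw [Perm.extendDomain_apply_not_subtype _ _ hx,
      Equiv.swap_apply_of_ne_of_ne (fun h => hx (by rw [h]; exact (f i).2))
        (fun h => hx (by rw [h]; exact (f j).2))]

/-- Key lemma: a nontrivial subgroup of `A_n` (`n ≥ 5`) closed under conjugation by `A_n`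
contains all of `A_n`. -/
lemma key (hn : 5 ≤ n) (K : Subgroup (Perm (Fin n)))
    (hKA : K ≤ alternatingGroup (Fin n))
    (hKc : ∀ a ∈ alternatingGroup (Fin n), ∀ x ∈ K, a * x * a⁻¹ ∈ K)
    (hKbot : K ≠ ⊥) : alternatingGroup (Fin n) ≤ K := by
  classical
  have hcard : Fintype.card (Fin n) = n := Fintype.card_fin n
  obtain ⟨⟨σ, hσK⟩, hσ1⟩ := Subgroup.ne_bot_iff_exists_ne_one.mp hKbot
  have hσ1' : σ ≠ 1 := by simpa [Subtype.ext_iff] using hσ1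
  obtain ⟨a, ha⟩ : ∃ a, σ a ≠ a := by
    by_contra h
    push_neg at h
    exact hσ1' (Equiv.ext fun x => (h x).trans (Perm.one_apply x).symm)
  set b := σ a with hb
  have hab : a ≠ b := fun h => ha h.symm
  obtain ⟨c, hc⟩ : ∃ c, c ∉ ({a, b, σ b} : Finset (Fin n)) := by
    have h3 : ({a, b, σ b} : Finset (Fin n)).card ≤ 3 := by
      refine le_trans (Finset.card_insert_le _ _) (Nat.succ_le_succ ?_)
      refine le_trans (Finset.card_insert_le _ _) (by simp)
    have hne : (({a, b, σ b} : Finset (Fin n))ᶜ).Nonempty := by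
      rw [← Finset.card_pos, Finset.card_compl, hcard]; omega
    obtain ⟨c, hc⟩ := hne
    exact ⟨c, by simpa [Finset.mem_compl] using hc⟩
  simp only [Finset.mem_insert, Finset.mem_singleton, not_or] at hc
  obtain ⟨hca, hcb, hcσb⟩ := hc
  have hbc : b ≠ c := fun h => hcb h.symm
  set π := Equiv.swap a b * Equiv.swap b c with hπ
  have hπA : π ∈ alternatingGroup (Fin n) := by
    rw [mem_alternatingGroup, hπ, map_mul, sign_swap hab, sign_swap hbc]
    norm_num
  set τ := σ * (π * σ⁻¹ * π⁻¹) with hτ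
  have hτK : τ ∈ K := K.mul_mem hσK (hKc π hπA σ⁻¹ (K.inv_mem hσK))
  have hπinvc : π⁻¹ c = b := by
    rw [hπ, mul_inv_rev, Equiv.swap_inv, Equiv.swap_inv, Perm.mul_apply,
      Equiv.swap_apply_of_ne_of_ne hca hcb, Equiv.swap_apply_right]
  have hπa : π a = b := by
    rw [hπ, Perm.mul_apply, Equiv.swap_apply_of_ne_of_ne hab (fun h => hca h.symm),
      Equiv.swap_apply_left]
  have hτc : τ c = σ b := by
    rw [hτ]
    simp only [Perm.mul_apply]
    rw [hπinvc, hb, (by exact Equiv.symm_apply_apply σ a : σ⁻¹ (σ a) = a), hπa]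
  have hτ1 : τ ≠ 1 := by
    intro h
    rw [h] at hτc
    exact hcσb (by simpa using hτc)
  -- τ is supported in S0
  set S0 : Finset (Fin n) := {a, b, c, σ b, σ c} with hS0
  have hfix : ∀ x, x ∉ S0 → τ x = x := by
    intro x hx
    simp only [hS0, Finset.mem_insert, Finset.mem_singleton, not_or] at hx
    obtain ⟨hxa, hxb, hxc, hxσb, hxσc⟩ := hx
    have hπx : ∀ y, y ≠ a → y ≠ b → y ≠ c → π y = y := by
      intro y h1 h2 h3
      rw [hπ, Perm.mul_apply, Equiv.swap_apply_of_ne_of_ne h2 h3,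
        Equiv.swap_apply_of_ne_of_ne h1 h2]
    have hπinvx : π⁻¹ x = x := by
      rw [Equiv.Perm.inv_eq_iff_eq, hπx x hxa hxb hxc]
    have h1 : σ⁻¹ x ≠ a := fun h => hxb (by rw [hb, ← h, (by exact Equiv.apply_symm_apply σ x : σ (σ⁻¹ x) = x)])
    have h2 : σ⁻¹ x ≠ b := fun h => hxσb (by rw [← h, (by exact Equiv.apply_symm_apply σ x : σ (σ⁻¹ x) = x)])
    have h3 : σ⁻¹ x ≠ c := fun h => hxσc (by rw [← h, (by exact Equiv.apply_symm_apply σ x : σ (σ⁻¹ x) = x)])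
    rw [hτ]
    simp only [Perm.mul_apply]
    rw [hπinvx, hπx _ h1 h2 h3, (by exact Equiv.apply_symm_apply σ x : σ (σ⁻¹ x) = x)]
  -- pad S0 to a 5-element set S
  have hS0card : S0.card ≤ 5 := by
    refine le_trans (Finset.card_insert_le _ _) (Nat.succ_le_succ ?_)
    refine le_trans (Finset.card_insert_le _ _) (Nat.succ_le_succ ?_)
    refine le_trans (Finset.card_insert_le _ _) (Nat.succ_le_succ ?_)
    refine le_trans (Finset.card_insert_le _ _) (by simp)
  obtain ⟨S, hS0S, -, hS5⟩ :=
    Finset.exists_subsuperset_card_eq (Finset.subset_univ S0) hS0card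
      (by rw [Finset.card_univ, hcard]; omega)
  set f : Fin 5 ≃ {x // x ∈ S} := (S.equivFinOfCardEq hS5).symm with hf
  set φ : Perm (Fin 5) →* Perm (Fin n) := Equiv.Perm.extendDomainHom f with hφ
  have hφ_apply : ∀ g : Perm (Fin 5), φ g = g.extendDomain f := fun _ => rfl
  have hφsign : ∀ g : Perm (Fin 5), sign (φ g) = sign g := fun g =>
    sign_extendDomain g f
  -- the pulled-back subgroup of A_5
  set ψ : alternatingGroup (Fin 5) →* Perm (Fin n) :=
    φ.comp (alternatingGroup (Fin 5)).subtype with hψ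
  set H : Subgroup (alternatingGroup (Fin 5)) := K.comap ψ with hH
  have hHnormal : H.Normal := by
    constructor
    intro h hh g
    rw [hH, Subgroup.mem_comap] at hh ⊢
    have : ψ (g * h * g⁻¹) = ψ g * ψ h * (ψ g)⁻¹ := by
      rw [map_mul, map_mul, map_inv]
    rw [this]
    refine hKc _ ?_ _ hh
    rw [mem_alternatingGroup]
    have : sign (ψ g) = sign ((g : Perm (Fin 5))) := hφsign _
    rw [this]
    exact mem_alternatingGroup.mp g.2
  -- τ comes from A_5
  have hmaps : ∀ x, x ∈ S ↔ τ x ∈ S := by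
    intro x
    constructor
    · intro hx
      by_contra hτx
      have h1 : τ (τ x) = τ x := hfix _ (fun h => hτx (hS0S h))
      have h2 : τ x = x := τ.injective h1
      exact hτx (by rw [h2]; exact hx)
    · intro hτx
      by_contra hx
      have h1 : τ x = x := hfix _ (fun h => hx (hS0S h))
      exact hx (h1 ▸ hτx)
  set τS : Perm {x // x ∈ S} := τ.subtypePerm (fun x => (hmaps x).symm) with hτS
  set g0 : Perm (Fin 5) := f.symm.permCongr τS with hg0
  have hφg0 : φ g0 = τ := by
    ext x
    by_cases hx : x ∈ S
    · obtain ⟨y, rfl⟩ : ∃ y, ((f y : Fin n)) = x := ⟨f.symm ⟨x, hx⟩, by simp⟩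
      rw [hφ_apply, Perm.extendDomain_apply_image]
      have : g0 y = f.symm (τS (f y)) := by
        rw [hg0, Equiv.permCongr_apply]
        simp
      rw [this, Equiv.apply_symm_apply]
      rfl
    · rw [hφ_apply, Perm.extendDomain_apply_not_subtype _ _ hx,
        hfix _ (fun h => hx (hS0S h))]
  have hg0sign : g0 ∈ alternatingGroup (Fin 5) := by
    rw [mem_alternatingGroup, ← hφsign, hφg0]
    exact mem_alternatingGroup.mp (hKA hτK)
  have hg0ne : (⟨g0, hg0sign⟩ : alternatingGroup (Fin 5)) ≠ 1 := by
    intro h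
    apply hτ1
    rw [← hφg0]
    have : g0 = 1 := by simpa [Subtype.ext_iff] using h
    rw [this, map_one]
  have hHne : H ≠ ⊥ := by
    intro hbot
    rw [Subgroup.eq_bot_iff_forall] at hbot
    refine hg0ne (hbot _ ?_)
    rw [hH, Subgroup.mem_comap]
    show φ g0 ∈ K
    rw [hφg0]; exact hτK
  have hHtop : H = ⊤ := (hHnormal.eq_bot_or_eq_top).resolve_left hHne
  -- extract a 3-cycle of K
  set x0 : Fin n := (f 0 : Fin n)
  set x1 : Fin n := (f 1 : Fin n)
  set x2 : Fin n := (f 2 : Fin n)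
  have hinj : Function.Injective fun i : Fin 5 => (f i : Fin n) :=
    fun i j h => f.injective (Subtype.coe_injective h)
  have h01 : x0 ≠ x1 := fun h => absurd (hinj h) (by decide)
  have h02 : x0 ≠ x2 := fun h => absurd (hinj h) (by decide)
  have h12 : x1 ≠ x2 := fun h => absurd (hinj h) (by decide)
  set g1 : Perm (Fin 5) := Equiv.swap 0 1 * Equiv.swap 0 2 with hg1
  have hg1A : g1 ∈ alternatingGroup (Fin 5) := by
    rw [mem_alternatingGroup, hg1, map_mul, sign_swap (by decide), sign_swap (by decide)]
    norm_num
  have hg1H : (⟨g1, hg1A⟩ : alternatingGroup (Fin 5)) ∈ H := by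
    rw [hHtop]; trivial
  have hφg1 : φ g1 = Equiv.swap x0 x1 * Equiv.swap x0 x2 := by
    rw [hg1, map_mul, hφ_apply, hφ_apply, extendDomain_swap', extendDomain_swap']
  have htK : Equiv.swap x0 x1 * Equiv.swap x0 x2 ∈ K := by
    rw [hH, Subgroup.mem_comap] at hg1H
    have : ψ ⟨g1, hg1A⟩ = φ g1 := rfl
    rw [this, hφg1] at hg1H
    exact hg1H
  have ht3 : IsThreeCycle (Equiv.swap x0 x1 * Equiv.swap x0 x2) :=
    isThreeCycle_swap_mul_swap_same h01 h02 h12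
  -- conclude via the normal closure of a 3-cycle
  have hNnorm : (K.subgroupOf (alternatingGroup (Fin n))).Normal := by
    constructor
    intro x hx g
    rw [Subgroup.mem_subgroupOf] at hx ⊢
    have : ((g * x * g⁻¹ : alternatingGroup (Fin n)) : Perm (Fin n))
        = (g : Perm (Fin n)) * (x : Perm (Fin n)) * (g : Perm (Fin n))⁻¹ := rfl
    rw [this]
    exact hKc _ g.2 _ hx
  have hclos := ht3.alternating_normalClosure (by rw [Nat.card_eq_fintype_card, hcard]; exact hn)
  have hle : Subgroup.normalClosure
      ({⟨_, ht3.mem_alternatingGroup⟩} : Set (alternatingGroup (Fin n)))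
      ≤ K.subgroupOf (alternatingGroup (Fin n)) := by
    apply Subgroup.normalClosure_le_normal
    intro x hx
    rw [Set.mem_singleton_iff] at hx
    subst hx
    rw [SetLike.mem_coe, Subgroup.mem_subgroupOf]
    exact htK
  have htop : K.subgroupOf (alternatingGroup (Fin n)) = ⊤ :=
    top_unique (hclos ▸ hle)
  exact Subgroup.subgroupOf_eq_top.mp htop

end CircStable18

/-- Let `n ≥ 5`. For the skew left brace on `S_n` arising from the
exact factorization `S_n = A_n · ⟨τ⟩` (`τ` a transposition), a subgroup is `∘`-stable
iff it is closed under conjugation by all even permutations; and the only subgroups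
of `S_n` closed under conjugation by all elements of `A_n` are `{e}`, `A_n`, and
`S_n`. -/
theorem circ_stable_subgroups_of_Sn (n : ℕ) (hn : 5 ≤ n)
    (G' : Subgroup (Equiv.Perm (Fin n)))
    (hstable : ∀ a ∈ alternatingGroup (Fin n), ∀ x ∈ G', a * x * a⁻¹ ∈ G') :
    G' = ⊥ ∨ G' = alternatingGroup (Fin n) ∨ G' = ⊤ := by
  classical
  have hcard : Fintype.card (Fin n) = n := Fintype.card_fin n
  set A := alternatingGroup (Fin n) with hA
  set K := G' ⊓ A with hK
  have hKc : ∀ a ∈ A, ∀ x ∈ K, a * x * a⁻¹ ∈ K := by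
    intro a ha x hx
    rw [hK, Subgroup.mem_inf] at hx ⊢
    exact ⟨hstable a ha x hx.1, A.mul_mem (A.mul_mem ha hx.2) (A.inv_mem ha)⟩
  by_cases hKbot : K = ⊥
  · left
    rw [Subgroup.eq_bot_iff_forall]
    intro σ hσ
    by_contra hσ1
    have hσA : σ ∉ A := by
      intro h
      have hσK : σ ∈ K := Subgroup.mem_inf.mpr ⟨hσ, h⟩
      rw [hKbot, Subgroup.mem_bot] at hσK
      exact hσ1 hσK
    have hσsign : Equiv.Perm.sign σ = -1 := by
      rcases Int.units_eq_one_or (Equiv.Perm.sign σ) with h | h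
      · exact absurd (Equiv.Perm.mem_alternatingGroup.mpr h) hσA
      · exact h
    have h4 : ∀ a ∈ A, a * σ * a⁻¹ = σ⁻¹ := by
      intro a haA
      have h1 : a * σ * a⁻¹ * σ ∈ G' := G'.mul_mem (hstable a haA σ hσ) hσ
      have h2 : a * σ * a⁻¹ * σ ∈ A := by
        rw [hA, Equiv.Perm.mem_alternatingGroup]
        have hasign : Equiv.Perm.sign a = 1 := Equiv.Perm.mem_alternatingGroup.mp haA
        simp [hasign, hσsign]
      have h3 : a * σ * a⁻¹ * σ ∈ K := Subgroup.mem_inf.mpr ⟨h1, h2⟩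
      rw [hKbot, Subgroup.mem_bot] at h3
      exact mul_eq_one_iff_eq_inv.mp h3
    have h5 : σ⁻¹ = σ := by
      have := h4 1 (one_mem A)
      simpa using this.symm
    have hcomm : ∀ a ∈ A, a * σ = σ * a := by
      intro a ha
      have := h4 a ha
      rw [h5] at this
      exact mul_inv_eq_iff_eq_mul.mp this
    obtain ⟨i, hi⟩ : ∃ i, σ i ≠ i := by
      by_contra h
      push_neg at h
      exact hσ1 (Equiv.ext fun x => (h x).trans (Equiv.Perm.one_apply x).symm)
    set j := σ i with hj
    obtain ⟨k, hk, l, hl, hkl⟩ : ∃ k ∈ ({i, j} : Finset (Fin n))ᶜ,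
        ∃ l ∈ ({i, j} : Finset (Fin n))ᶜ, k ≠ l := by
      apply Finset.one_lt_card.mp
      have h2 : ({i, j} : Finset (Fin n)).card ≤ 2 :=
        le_trans (Finset.card_insert_le _ _) (by simp)
      rw [Finset.card_compl, hcard]
      omega
    simp only [Finset.mem_compl, Finset.mem_insert, Finset.mem_singleton, not_or] at hk hl
    obtain ⟨hki, hkj⟩ := hk
    obtain ⟨hli, hlj⟩ := hl
    set π := Equiv.swap j k * Equiv.swap j l with hπ
    have hπA : π ∈ A := by
      rw [hA, Equiv.Perm.mem_alternatingGroup, hπ, map_mul,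
        Equiv.Perm.sign_swap (fun h => hkj h.symm), Equiv.Perm.sign_swap (fun h => hlj h.symm)]
      norm_num
    have hcπ := hcomm π hπA
    have hπi : π i = i := by
      rw [hπ, Equiv.Perm.mul_apply,
        Equiv.swap_apply_of_ne_of_ne (fun h => hi h.symm) (fun h => hli h.symm),
        Equiv.swap_apply_of_ne_of_ne (fun h => hi h.symm) (fun h => hki h.symm)]
    have hπj : π j = l := by
      rw [hπ, Equiv.Perm.mul_apply, Equiv.swap_apply_left,
        Equiv.swap_apply_of_ne_of_ne hlj (fun h => hkl h.symm)]
    have heval : π j = j := by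
      have h := congrArg (fun p : Equiv.Perm (Fin n) => p i) hcπ
      simp only [Equiv.Perm.mul_apply] at h
      rw [hπi] at h
      exact h
    rw [hπj] at heval
    exact hlj heval
  · have hAK : A ≤ K := CircStable18.key hn K inf_le_right hKc hKbot
    have hAG : A ≤ G' := hAK.trans inf_le_left
    by_cases hGA : G' ≤ A
    · right; left
      exact le_antisymm hGA hAG
    · right; right
      obtain ⟨σ0, hσ0G, hσ0A⟩ := SetLike.not_le_iff_exists.mp hGA
      have hσ0sign : Equiv.Perm.sign σ0 = -1 := by
        rcases Int.units_eq_one_or (Equiv.Perm.sign σ0) with h | h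
        · exact absurd (Equiv.Perm.mem_alternatingGroup.mpr h) hσ0A
        · exact h
      rw [Subgroup.eq_top_iff']
      intro x
      by_cases hx : x ∈ A
      · exact hAG hx
      · have hxsign : Equiv.Perm.sign x = -1 := by
          rcases Int.units_eq_one_or (Equiv.Perm.sign x) with h | h
          · exact absurd (Equiv.Perm.mem_alternatingGroup.mpr h) hx
          · exact h
        have h1 : σ0⁻¹ * x ∈ A := by
          rw [hA, Equiv.Perm.mem_alternatingGroup, map_mul, map_inv, hσ0sign, hxsign]
          norm_num
        have h2 : σ0 * (σ0⁻¹ * x) ∈ G' := G'.mul_mem hσ0G (hAG h1)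
        simpa [mul_inv_cancel_left] using h2
end
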